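/- Let x be a real algebraic integer of degree 2 over ℚ such that |x| < 2 and the other root x̄ of its minimal polynomial also satisfies |x̄| < 2. Then x ∈ {√2, -√2, √3, -√3, (1+√5)/2, (1-√5)/2, (-1+√5)/2, (-1-√5)/2}. -/

import Mathlib

open Polynomial

set_option maxHeartbeats 2000000 in
theorem quadratic_integers_with_small_conjugates
    (x : ℝ) (hint : IsIntegral ℤ x) (hdeg : (minpoly ℚ x).natDegree = 2)
    (hx : |x| < 2)
    (hconj : ∀ y : ℂ, Polynomial.aeval y (minpoly ℚ x) = 0 → ‖y‖ < 2) :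
    x ∈ ({Real.sqrt 2, -Real.sqrt 2, Real.sqrt 3, -Real.sqrt 3,
          (1 + Real.sqrt 5) / 2, (1 - Real.sqrt 5) / 2,
          (-1 + Real.sqrt 5) / 2, (-1 - Real.sqrt 5) / 2} : Set ℝ) := by
  have hmap : minpoly ℚ x = (minpoly ℤ x).map (algebraMap ℤ ℚ) :=
    minpoly.isIntegrallyClosed_eq_field_fractions' ℚ hint
  set p := minpoly ℤ x with hp
  have hpdeg : p.natDegree = 2 := by
    rw [hmap] at hdeg
    rwa [Polynomial.natDegree_map_eq_of_injective (algebraMap ℤ ℚ).injective_int] at hdeg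
  have hmon : p.Monic := minpoly.monic hint
  have hc2 : p.coeff 2 = 1 := by
    have := hmon.coeff_natDegree
    rwa [hpdeg] at this
  set b : ℤ := p.coeff 1 with hb
  set c : ℤ := p.coeff 0 with hcdef
  -- the real equation
  have heq : (c : ℝ) + (b : ℝ) * x + x ^ 2 = 0 := by
    have h0 : aeval x p = 0 := minpoly.aeval ℤ x
    rw [aeval_eq_sum_range (p := p), hpdeg] at h0
    simp [Finset.sum_range_succ, hc2, ← hb, ← hcdef, zsmul_eq_mul] at h0
    linarith [h0]
  -- the conjugate root
  have hzroot : aeval ((-(b:ℝ) - x : ℝ) : ℂ) (minpoly ℚ x) = 0 := by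
    rw [hmap, Polynomial.aeval_map_algebraMap]
    rw [aeval_eq_sum_range (p := p), hpdeg]
    simp only [Finset.sum_range_succ, Finset.sum_range_zero, hc2, ← hb, ← hcdef, zsmul_eq_mul]
    push_cast
    have : ((c : ℝ) + (b:ℝ) * (-(b:ℝ) - x) + (-(b:ℝ) - x) ^ 2 : ℝ) = 0 := by nlinarith [heq]
    have := congrArg (Complex.ofReal) this
    push_cast at this
    linear_combination this
  have hbx : |(-(b:ℝ) - x)| < 2 := by
    have := hconj _ hzroot
    rwa [Complex.norm_real, Real.norm_eq_abs] at this
  obtain ⟨hx1, hx2⟩ := abs_lt.mp hx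
  obtain ⟨hu1, hu2⟩ := abs_lt.mp hbx
  -- bounds on b and c
  have hbR : |(b:ℝ)| < 4 := by
    rw [abs_lt]; constructor <;> nlinarith
  have hcR : |(c:ℝ)| < 4 := by
    have hceq : (c:ℝ) = x * (-(b:ℝ) - x) := by nlinarith [heq]
    rw [hceq, abs_mul]
    calc |x| * |(-(b:ℝ) - x)| ≤ 2 * |(-(b:ℝ) - x)| := by
          apply mul_le_mul_of_nonneg_right (le_of_lt hx) (abs_nonneg _)
      _ < 2 * 2 := by apply mul_lt_mul_of_pos_left hbx (by norm_num)
      _ = 4 := by norm_num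
  have hb1 : -3 ≤ b := by
    by_contra h
    push_neg at h
    have : (b:ℝ) ≤ -4 := by exact_mod_cast (by omega : b ≤ -4)
    have := abs_lt.mp hbR; linarith [this.1]
  have hb2 : b ≤ 3 := by
    by_contra h
    push_neg at h
    have : (4:ℝ) ≤ (b:ℝ) := by exact_mod_cast (by omega : 4 ≤ b)
    have := abs_lt.mp hbR; linarith [this.2]
  have hc1 : -3 ≤ c := by
    by_contra h
    push_neg at h
    have : (c:ℝ) ≤ -4 := by exact_mod_cast (by omega : c ≤ -4)
    have := abs_lt.mp hcR; linarith [this.1]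
  have hc2' : c ≤ 3 := by
    by_contra h
    push_neg at h
    have : (4:ℝ) ≤ (c:ℝ) := by exact_mod_cast (by omega : 4 ≤ c)
    have := abs_lt.mp hcR; linarith [this.2]
  -- irrationality
  have h0 : x ≠ 0 := by
    intro h
    have : minpoly ℚ x = X - C (0:ℚ) := by
      rw [h]; exact_mod_cast minpoly.eq_X_sub_C ℝ (0:ℚ)
    rw [this] at hdeg; simp at hdeg
  have hrat : ∀ q : ℚ, x ≠ (q:ℝ) := by
    intro q h
    have : minpoly ℚ x = X - C q := by
      rw [h]; exact_mod_cast minpoly.eq_X_sub_C ℝ q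
    rw [this] at hdeg
    rw [Polynomial.natDegree_X_sub_C] at hdeg
    omega
  have h1 : x ≠ 1 := by simpa using hrat 1
  have hm1 : x ≠ -1 := by simpa using hrat (-1)
  have s2 : Real.sqrt 2 ^ 2 = 2 := Real.sq_sqrt (by norm_num)
  have s3 : Real.sqrt 3 ^ 2 = 3 := Real.sq_sqrt (by norm_num)
  have s5 : Real.sqrt 5 ^ 2 = 5 := Real.sq_sqrt (by norm_num)
  simp only [Set.mem_insert_iff, Set.mem_singleton_iff]
  clear hbR hcR hbx hx hconj hzroot hmap hc2 hmon hpdeg hint hdeg hrat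
  interval_cases b <;> interval_cases c <;>
    push_cast at heq hu1 hu2 <;>
    try nlinarith [heq, hu1, hu2, hx1, hx2, sq_nonneg x, sq_nonneg (x+1), sq_nonneg (x-1)]
  -- (b,c) = (-2,1): x = 1
  · exact absurd (by nlinarith [sq_nonneg (x-1)] : x = 1) h1
  -- (b,c) = (-1,-1): x = (1 ± √5)/2
  · have hf : (x - (1 + Real.sqrt 5)/2) * (x - (1 - Real.sqrt 5)/2) = 0 := by
      linear_combination heq - s5/4
    rcases mul_eq_zero.mp hf with h | h
    · have : x = (1 + Real.sqrt 5)/2 := by linarith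
      tauto
    · have : x = (1 - Real.sqrt 5)/2 := by linarith
      tauto
  -- (b,c) = (-1,0): x = 0 or 1
  · have hf : x * (x - 1) = 0 := by linear_combination heq
    rcases mul_eq_zero.mp hf with h | h
    · exact absurd h h0
    · exact absurd (by linarith : x = 1) h1
  -- (0,-3): x = ±√3
  · have hf : (x - Real.sqrt 3) * (x + Real.sqrt 3) = 0 := by
      linear_combination heq - s3
    rcases mul_eq_zero.mp hf with h | h
    · have : x = Real.sqrt 3 := by linarith
      tauto
    · have : x = -Real.sqrt 3 := by linarith
      tauto
  -- (0,-2): x = ±√2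
  · have hf : (x - Real.sqrt 2) * (x + Real.sqrt 2) = 0 := by
      linear_combination heq - s2
    rcases mul_eq_zero.mp hf with h | h
    · have : x = Real.sqrt 2 := by linarith
      tauto
    · have : x = -Real.sqrt 2 := by linarith
      tauto
  -- (0,-1): x = ±1
  · have hf : (x - 1) * (x + 1) = 0 := by linear_combination heq
    rcases mul_eq_zero.mp hf with h | h
    · exact absurd (by linarith : x = 1) h1
    · exact absurd (by linarith : x = -1) hm1
  -- (0,0): x = 0
  · exact absurd (by nlinarith [sq_nonneg x] : x = 0) h0
  -- (1,-1): x = (-1 ± √5)/2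
  · have hf : (x - (-1 + Real.sqrt 5)/2) * (x - (-1 - Real.sqrt 5)/2) = 0 := by
      linear_combination heq - s5/4
    rcases mul_eq_zero.mp hf with h | h
    · have : x = (-1 + Real.sqrt 5)/2 := by linarith
      tauto
    · have : x = (-1 - Real.sqrt 5)/2 := by linarith
      tauto
  -- (1,0): x = 0 or -1
  · have hf : x * (x + 1) = 0 := by linear_combination heq
    rcases mul_eq_zero.mp hf with h | h
    · exact absurd h h0
    · exact absurd (by linarith : x = -1) hm1
  -- (2,1): x = -1
  · exact absurd (by nlinarith [sq_nonneg (x+1)] : x = -1) hm1
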